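/- Main theorem, complex case: let φ be a traceless 3×3 complex matrix, ρ ∈ ℝ, A and B Hermitian 3×3 complex matrices, X and Y Hermitian 3×3 complex matrices, and p, q ∈ ℝ. Then the symplectic action of the 6×6 matrix Θ(φ,ρ,A,B) on the antisymmetric tensor P(X,Y,p,q) equals the tensor built from the Freudenthal action: Θ(φ,ρ,A,B)·P(X,Y,p,q) = P(X',Y',p',q'), where X' = φX + Xφ† + (ρ/3)X + 2·B*Y + qA, Y' = 2·A*X − φ†Y − Yφ − (ρ/3)Y + pB, p' = tr(A∘Y) − ρp, and q' = tr(B∘X) + ρq. -/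

import Mathlib

open Matrix BigOperators

/-- 3×3 complex matrices. -/
abbrev Mat3 := Matrix (Fin 3) (Fin 3) ℂ

/-- Sign of an integer, valued in ℤ. -/
def sgnZ (n : ℤ) : ℤ := if 0 < n then 1 else if n < 0 then -1 else 0

/-- The Levi-Civita symbol on `Fin 3`. -/
def eps (a b c : Fin 3) : ℤ :=
  sgnZ ((b : ℤ) - (a : ℤ)) * sgnZ ((c : ℤ) - (a : ℤ)) * sgnZ ((c : ℤ) - (b : ℤ))

/-- The cubie of a 3×3 matrix: (*X)_{abc} = X_a^m ε_{mbc}. -/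
noncomputable def cubie (X : Mat3) (a b c : Fin 3) : ℂ :=
  ∑ m, X a m * ((eps m b c : ℤ) : ℂ)

/-- The Jordan product X∘Y = (XY+YX)/2. -/
noncomputable def jord (X Y : Mat3) : Mat3 := (1/2 : ℂ) • (X * Y + Y * X)

/-- The Freudenthal product. -/
noncomputable def freud (X Y : Mat3) : Mat3 :=
  jord X Y - (1/2 : ℂ) • (X.trace • Y + Y.trace • X)
    + (1/2 : ℂ) • (X.trace * Y.trace - (jord X Y).trace) • (1 : Mat3)

/-- Reduce an index in {1,...,6} to an index in {1,2,3}: for a "large" index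
(value ≥ 4, i.e. `Fin 6` value ≥ 3) this is a−3; "small" indices are unchanged. -/
def lo (a : Fin 6) : Fin 3 := ⟨a.val % 3, Nat.mod_lt _ (by norm_num)⟩

/-- The totally antisymmetric rank-3 tensor P(X,Y,p,q) on indices in {1,...,6}:
its 000 cubie is p·ε, its 100 cubie is *Y, its 011 cubie is *X, its 111 cubie
is q·ε, and all other components are determined by total antisymmetry
(using that (*X)_{abc} is antisymmetric in its last two indices). -/
noncomputable def PT (X Y : Mat3) (p q : ℂ) : Fin 6 → Fin 6 → Fin 6 → ℂ := fun a b c =>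
  if a.val < 3 then
    if b.val < 3 then
      if c.val < 3 then p * ((eps (lo a) (lo b) (lo c) : ℤ) : ℂ)  -- (s,s,s)
      else cubie Y (lo c) (lo a) (lo b)                            -- (s,s,l) = +P_{cab}
    else
      if c.val < 3 then -(cubie Y (lo b) (lo a) (lo c))            -- (s,l,s) = −P_{bac}
      else cubie X (lo a) (lo b) (lo c)                            -- (s,l,l)
  else
    if b.val < 3 then
      if c.val < 3 then cubie Y (lo a) (lo b) (lo c)               -- (l,s,s)
      else -(cubie X (lo b) (lo a) (lo c))                         -- (l,s,l) = −P_{bac}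
    else
      if c.val < 3 then cubie X (lo c) (lo a) (lo b)               -- (l,l,s) = +P_{cab}
      else q * ((eps (lo a) (lo b) (lo c) : ℤ) : ℂ)                -- (l,l,l)

/-- The action of a 6×6 matrix Θ on a rank-3 tensor:
(Θ·P)_{abc} = Θ_a^m P_{mbc} + Θ_b^m P_{amc} + Θ_c^m P_{abm}. -/
noncomputable def act (Θ : Matrix (Fin 6) (Fin 6) ℂ) (P : Fin 6 → Fin 6 → Fin 6 → ℂ) :
    Fin 6 → Fin 6 → Fin 6 → ℂ := fun a b c =>
  (∑ m, Θ a m * P m b c) + (∑ m, Θ b m * P a m c) + (∑ m, Θ c m * P a b m)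

/-- The 6×6 block matrix Θ(φ,ρ,A,B) = [[φ − (ρ/3)I, A],[B, −φ† + (ρ/3)I]]. -/
noncomputable def ThetaM (φ : Mat3) (ρ : ℝ) (A B : Mat3) : Matrix (Fin 6) (Fin 6) ℂ :=
  Matrix.reindex finSumFinEquiv finSumFinEquiv
    (Matrix.fromBlocks (φ - ((ρ : ℂ)/3) • 1) A B (-φᴴ + ((ρ : ℂ)/3) • 1))


section Aux

private lemma fs_aux (a : Fin 6) : (finSumFinEquiv (m:=3) (n:=3)).symm a
    = if a.val < 3 then Sum.inl (lo a) else Sum.inr (lo a) := by revert a; decide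

private lemma ThetaM_apply (φ : Mat3) (ρ : ℝ) (A B : Mat3) (a b : Fin 6) :
    ThetaM φ ρ A B a b =
    if a.val < 3 then
      (if b.val < 3 then φ (lo a) (lo b) - (if lo a = lo b then (ρ:ℂ)/3 else 0)
       else A (lo a) (lo b))
    else
      (if b.val < 3 then B (lo a) (lo b)
       else -(φᴴ (lo a) (lo b)) + (if lo a = lo b then (ρ:ℂ)/3 else 0)) := by
  rw [ThetaM, Matrix.reindex_apply, Matrix.submatrix_apply, fs_aux, fs_aux]
  split_ifs with h1 h2 h2 <;>
    simp only [Matrix.fromBlocks_apply₁₁, Matrix.fromBlocks_apply₁₂,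
      Matrix.fromBlocks_apply₂₁, Matrix.fromBlocks_apply₂₂, Matrix.sub_apply,
      Matrix.smul_apply, Matrix.one_apply, Matrix.neg_apply, Matrix.add_apply,
      smul_eq_mul, mul_ite, mul_one, mul_zero] <;> split_ifs <;> simp_all

private lemma cubie_00 (X : Mat3) (a : Fin 3) : cubie X a 0 0 = 0 := by
  simp [cubie, Fin.sum_univ_three, eps, sgnZ]
private lemma cubie_01 (X : Mat3) (a : Fin 3) : cubie X a 0 1 = X a 2 := by
  simp [cubie, Fin.sum_univ_three, eps, sgnZ]
private lemma cubie_02 (X : Mat3) (a : Fin 3) : cubie X a 0 2 = -X a 1 := by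
  norm_num [cubie, Fin.sum_univ_three, eps, sgnZ]
private lemma cubie_10 (X : Mat3) (a : Fin 3) : cubie X a 1 0 = -X a 2 := by
  simp [cubie, Fin.sum_univ_three, eps, sgnZ]
private lemma cubie_11 (X : Mat3) (a : Fin 3) : cubie X a 1 1 = 0 := by
  simp [cubie, Fin.sum_univ_three, eps, sgnZ]
private lemma cubie_12 (X : Mat3) (a : Fin 3) : cubie X a 1 2 = X a 0 := by
  norm_num [cubie, Fin.sum_univ_three, eps, sgnZ]
private lemma cubie_20 (X : Mat3) (a : Fin 3) : cubie X a 2 0 = X a 1 := by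
  norm_num [cubie, Fin.sum_univ_three, eps, sgnZ]
private lemma cubie_21 (X : Mat3) (a : Fin 3) : cubie X a 2 1 = -X a 0 := by
  norm_num [cubie, Fin.sum_univ_three, eps, sgnZ]
private lemma cubie_22 (X : Mat3) (a : Fin 3) : cubie X a 2 2 = 0 := by
  simp [cubie, Fin.sum_univ_three, eps, sgnZ]

private lemma lv0 : ((0:Fin 6):ℕ) = 0 := rfl
private lemma lv1 : ((1:Fin 6):ℕ) = 1 := rfl
private lemma lv2 : ((2:Fin 6):ℕ) = 2 := rfl
private lemma lv3 : ((3:Fin 6):ℕ) = 3 := rfl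
private lemma lv4 : ((4:Fin 6):ℕ) = 4 := rfl
private lemma lv5 : ((5:Fin 6):ℕ) = 5 := rfl
private lemma lol0 : lo 0 = 0 := rfl
private lemma lol1 : lo 1 = 1 := rfl
private lemma lol2 : lo 2 = 2 := rfl
private lemma lol3 : lo 3 = 0 := rfl
private lemma lol4 : lo 4 = 1 := rfl
private lemma lol5 : lo 5 = 2 := rfl
private lemma ec012 : ((eps 0 1 2 : ℤ):ℂ) = 1 := by norm_num [eps, sgnZ]
private lemma ec021 : ((eps 0 2 1 : ℤ):ℂ) = -1 := by norm_num [eps, sgnZ]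
private lemma ec102 : ((eps 1 0 2 : ℤ):ℂ) = -1 := by norm_num [eps, sgnZ]
private lemma ec120 : ((eps 1 2 0 : ℤ):ℂ) = 1 := by norm_num [eps, sgnZ]
private lemma ec201 : ((eps 2 0 1 : ℤ):ℂ) = 1 := by norm_num [eps, sgnZ]
private lemma ec210 : ((eps 2 1 0 : ℤ):ℂ) = -1 := by norm_num [eps, sgnZ]
private lemma ecaab (a b : Fin 3) : ((eps a a b : ℤ):ℂ) = 0 := by
  have h : ∀ a b : Fin 3, eps a a b = 0 := by decide
  rw [h]; norm_num
private lemma ecaba (a b : Fin 3) : ((eps a b a : ℤ):ℂ) = 0 := by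
  have h : ∀ a b : Fin 3, eps a b a = 0 := by decide
  rw [h]; norm_num
private lemma ecbaa (a b : Fin 3) : ((eps b a a : ℤ):ℂ) = 0 := by
  have h : ∀ a b : Fin 3, eps b a a = 0 := by decide
  rw [h]; norm_num

end Aux

set_option maxHeartbeats 0 in
/-- main theorem, complex case: for φ traceless, ρ real, A, B, X, Y
Hermitian, and p, q real, the symplectic action of Θ(φ,ρ,A,B) on P(X,Y,p,q) equals
the tensor built from the Freudenthal action:
Θ(φ,ρ,A,B)·P(X,Y,p,q) = P(X',Y',p',q') with
X' = φX + Xφ† + (ρ/3)X + 2·B*Y + qA, Y' = 2·A*X − φ†Y − Yφ − (ρ/3)Y + pB,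
p' = tr(A∘Y) − ρp, q' = tr(B∘X) + ρq. -/
theorem stmt8 (φ : Mat3) (hφ : φ.trace = 0) (ρ : ℝ)
    (A B : Mat3) (hA : Aᴴ = A) (hB : Bᴴ = B)
    (X Y : Mat3) (hX : Xᴴ = X) (hY : Yᴴ = Y) (p q : ℝ) :
    act (ThetaM φ ρ A B) (PT X Y (p : ℂ) (q : ℂ))
      = PT (φ * X + X * φᴴ + ((ρ : ℂ)/3) • X + (2 : ℂ) • freud B Y + (q : ℂ) • A)
           ((2 : ℂ) • freud A X - φᴴ * Y - Y * φ - ((ρ : ℂ)/3) • Y + (p : ℂ) • B)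
           ((jord A Y).trace - (ρ : ℂ) * p)
           ((jord B X).trace + (ρ : ℂ) * q) := by
  have h1 : φ 2 2 = -φ 0 0 - φ 1 1 := by
    rw [Matrix.trace_fin_three] at hφ; linear_combination hφ
  have h2 : φᴴ 2 2 = -(φᴴ 0 0) - φᴴ 1 1 := by
    simp only [Matrix.conjTranspose_apply, ← starRingEnd_apply]
    have h : (starRingEnd ℂ) (φ 0 0 + φ 1 1 + φ 2 2) = 0 := by
      rw [← Matrix.trace_fin_three, hφ]; simp
    simp only [map_add] at h; linear_combination h
  funext a b c
  fin_cases a <;> fin_cases b <;> fin_cases c <;>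
    simp only [act, Fin.sum_univ_six, ThetaM_apply, PT, Fin.reduceFinMk, Fin.isValue,
      lv0, lv1, lv2, lv3, lv4, lv5, lol0, lol1, lol2, lol3, lol4, lol5,
      cubie_00, cubie_01, cubie_02, cubie_10, cubie_11, cubie_12,
      cubie_20, cubie_21, cubie_22,
      ec012, ec021, ec102, ec120, ec201, ec210, ecaab, ecaba, ecbaa,
      freud, jord, Matrix.trace_fin_three, Matrix.add_apply, Matrix.mul_apply,
      Matrix.smul_apply, Matrix.sub_apply, Matrix.one_apply, Matrix.neg_apply,
      Fin.sum_univ_three, smul_eq_mul,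
      Nat.reduceLT, Fin.reduceEq, reduceIte, if_true, if_false] <;>
    (try simp only [h1, h2]) <;> ring
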